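/- Let S/R be an extension of integral domains with S finitely generated as an R-algebra, and suppose that Frac(S) = Frac(R)(α) is a simple algebraic extension of Frac(R). Then there exists a subring T of Frac(S) containing S such that T is generated over R by a single element. -/

import Mathlib

open Polynomial

set_option maxHeartbeats 1000000 in
theorem stmt2 (R S K L : Type*) [CommRing R] [IsDomain R] [CommRing S] [IsDomain S]
    [Field K] [Field L]
    [Algebra R S] (hinj : Function.Injective (algebraMap R S))
    [Algebra R K] [IsFractionRing R K]
    [Algebra S L] [IsFractionRing S L]
    [Algebra R L] [Algebra K L] [IsScalarTower R S L] [IsScalarTower R K L]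
    (hfg : Algebra.FiniteType R S)
    (α : L) (halg : IsAlgebraic K α)
    (hgen : IntermediateField.adjoin K {α} = ⊤) :
    ∃ β : L, ∀ s : S, algebraMap S L s ∈ Algebra.adjoin R ({β} : Set L) := by
  classical
  have hRL : Function.Injective (algebraMap R L) := by
    rw [IsScalarTower.algebraMap_eq R K L]
    exact (algebraMap K L).injective.comp (IsFractionRing.injective R K)
  -- α is algebraic over R
  have halgR : IsAlgebraic R α := (IsFractionRing.isAlgebraic_iff R K L).mpr halg
  -- scale α to an integral element γ
  obtain ⟨a, ha0, hax⟩ := halgR.exists_integral_multiple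
  have hγint0 : IsIntegral R (algebraMap R L a * α) := by rw [← Algebra.smul_def]; exact hax
  set γ : L := algebraMap R L a * α with hγdef
  have hγint : IsIntegral R γ := hγint0
  have haL : algebraMap R L a ≠ 0 := fun h => ha0 (hRL (by rw [h, map_zero]))
  -- every element of L lies in the K-subalgebra generated by γ
  have hKγ : ∀ z : L, z ∈ Algebra.adjoin K ({γ} : Set L) := by
    intro z
    have hz : z ∈ Algebra.adjoin K ({α} : Set L) := by
      rw [← IntermediateField.adjoin_simple_toSubalgebra_of_isAlgebraic halg, hgen]
      trivial
    have hα : α ∈ Algebra.adjoin K ({γ} : Set L) := by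
      have hrw : α = algebraMap K L ((algebraMap R K a)⁻¹) * γ := by
        rw [map_inv₀, ← IsScalarTower.algebraMap_apply R K L, hγdef, ← mul_assoc,
          inv_mul_cancel₀ haL, one_mul]
      rw [hrw]
      exact mul_mem (Subalgebra.algebraMap_mem _ _) (Algebra.subset_adjoin rfl)
    exact Algebra.adjoin_le (Set.singleton_subset_iff.mpr hα) hz
  -- clearing denominators
  have hclear : ∀ z : L, ∃ d : R, d ≠ 0 ∧
      algebraMap R L d * z ∈ Algebra.adjoin R ({γ} : Set L) := by
    intro z
    have hz := hKγ z
    induction hz using Algebra.adjoin_induction with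
    | mem y hy =>
      refine ⟨1, one_ne_zero, ?_⟩
      rw [map_one, one_mul]
      exact Algebra.subset_adjoin hy
    | algebraMap k =>
      obtain ⟨⟨r, s⟩, rfl⟩ := IsLocalization.mk'_surjective (nonZeroDivisors R) k
      refine ⟨(s : R), nonZeroDivisors.ne_zero s.2, ?_⟩
      have : algebraMap R L (s : R) * algebraMap K L (IsLocalization.mk' K r s)
          = algebraMap R L r := by
        rw [IsScalarTower.algebraMap_apply R K L, ← map_mul, IsLocalization.mk'_spec',
          ← IsScalarTower.algebraMap_apply R K L]
      rw [this]
      exact Subalgebra.algebraMap_mem _ r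
    | add p q hp hq ihp ihq =>
      obtain ⟨d₁, h₁0, h₁⟩ := ihp
      obtain ⟨d₂, h₂0, h₂⟩ := ihq
      refine ⟨d₁ * d₂, mul_ne_zero h₁0 h₂0, ?_⟩
      have : algebraMap R L (d₁ * d₂) * (p + q)
          = algebraMap R L d₂ * (algebraMap R L d₁ * p)
            + algebraMap R L d₁ * (algebraMap R L d₂ * q) := by
        rw [map_mul]; ring
      rw [this]
      exact add_mem (mul_mem (Subalgebra.algebraMap_mem _ _) h₁)
        (mul_mem (Subalgebra.algebraMap_mem _ _) h₂)
    | mul p q hp hq ihp ihq =>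
      obtain ⟨d₁, h₁0, h₁⟩ := ihp
      obtain ⟨d₂, h₂0, h₂⟩ := ihq
      refine ⟨d₁ * d₂, mul_ne_zero h₁0 h₂0, ?_⟩
      have : algebraMap R L (d₁ * d₂) * (p * q)
          = (algebraMap R L d₁ * p) * (algebraMap R L d₂ * q) := by
        rw [map_mul]; ring
      rw [this]
      exact mul_mem h₁ h₂
  -- finitely many algebra generators of S
  obtain ⟨t, ht⟩ := hfg
  have hch : ∀ y : t, ∃ d : R, d ≠ 0 ∧
      algebraMap R L d * algebraMap S L (y : S) ∈ Algebra.adjoin R ({γ} : Set L) :=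
    fun y => hclear _
  choose df hdf0 hdfmem using hch
  set d : R := ∏ y ∈ t.attach, df y with hddef
  have hd0 : d ≠ 0 := Finset.prod_ne_zero_iff.mpr fun y _ => hdf0 y
  have hdL : algebraMap R L d ≠ 0 := fun h => hd0 (hRL (by rw [h, map_zero]))
  have hdt : ∀ y : t, algebraMap R L d * algebraMap S L (y : S)
      ∈ Algebra.adjoin R ({γ} : Set L) := by
    intro y
    have hsplit : d = df y * ∏ z ∈ t.attach.erase y, df z :=
      (Finset.mul_prod_erase _ _ (Finset.mem_attach t y)).symm
    have : algebraMap R L d * algebraMap S L (y : S)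
        = algebraMap R L (∏ z ∈ t.attach.erase y, df z)
          * (algebraMap R L (df y) * algebraMap S L (y : S)) := by
      rw [hsplit, map_mul]; ring
    rw [this]
    exact mul_mem (Subalgebra.algebraMap_mem _ _) (hdfmem y)
  -- the key element β
  set β : L := γ + (algebraMap R L d)⁻¹ with hβdef
  set A : Subalgebra R L := Algebra.adjoin R ({β} : Set L) with hA
  have hβA : β ∈ A := Algebra.subset_adjoin rfl
  obtain ⟨f, hfm, hf0⟩ := hγint
  have hf0' : aeval γ f = 0 := by rw [aeval_def]; exact hf0
  set g : R[X] := f.scaleRoots d with hg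
  have hgev : aeval (algebraMap R L d * γ) g = 0 := scaleRoots_aeval_eq_zero hf0'
  set u : L := algebraMap R L d * γ + 1 with hu
  have hu' : u = algebraMap R L d * β := by
    rw [hu, hβdef, mul_add, mul_inv_cancel₀ hdL]
  have huA : u ∈ A := by rw [hu']; exact mul_mem (Subalgebra.algebraMap_mem _ _) hβA
  set h : R[X] := g.comp ((X : R[X]) - C 1) with hh
  have hhu : aeval u h = 0 := by
    rw [hh, aeval_comp]
    have : aeval u ((X : R[X]) - C 1) = algebraMap R L d * γ := by
      rw [map_sub, aeval_X, aeval_C, hu, map_one]; ring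
    rw [this]
    exact hgev
  set w : L := aeval u h.divX with hw
  have hwA : w ∈ A := by
    rw [hw, aeval_eq_sum_range]
    exact Subalgebra.sum_mem _ fun i _ => Subalgebra.smul_mem _ (pow_mem huA i) _
  have e1 : u * w + algebraMap R L (h.coeff 0) = 0 := by
    have e0 := congrArg (aeval u) (X_mul_divX_add h)
    rw [map_add, map_mul, aeval_X, aeval_C, hhu] at e0
    exact e0
  have hc0 : h.coeff 0 = g.eval (-1) := by
    rw [hh, coeff_zero_eq_eval_zero, eval_comp]
    norm_num
  set n : ℕ := f.natDegree with hn
  have hE : ∃ E : R, g.eval (-1) = d * E + (-1) ^ n := by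
    have hgn : g.natDegree = n := natDegree_scaleRoots f d
    have h1 : g.eval (-1) = ∑ i ∈ Finset.range (g.natDegree + 1), g.coeff i * (-1) ^ i :=
      eval_eq_sum_range _
    rw [hgn, Finset.sum_range_succ] at h1
    have htop : g.coeff n * (-1) ^ n = (-1) ^ n := by
      rw [hg, hn, coeff_scaleRoots_natDegree, hfm.leadingCoeff, one_mul]
    have h2 : d ∣ ∑ i ∈ Finset.range n, g.coeff i * (-1) ^ i := by
      refine Finset.dvd_sum fun i hi => ?_
      have : d ∣ g.coeff i := by
        rw [hg, coeff_scaleRoots]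
        exact Dvd.dvd.mul_left
          (dvd_pow_self d (Nat.sub_ne_zero_of_lt (Finset.mem_range.mp hi))) _
      exact this.mul_right _
    obtain ⟨E, hE2⟩ := h2
    exact ⟨E, by rw [h1, hE2, htop]⟩
  obtain ⟨E, hEeq⟩ := hE
  -- from e1 : u*w + ((-1)^n + d*E) = 0 in L, extract 1/d ∈ A
  have e2 : u * w + (algebraMap R L d * algebraMap R L E + (-1 : L) ^ n) = 0 := by
    rw [← e1, hc0, hEeq]
    rw [map_add, map_mul, map_pow, map_neg, map_one]
  have hsq : ((-1 : L) ^ n) * ((-1 : L) ^ n) = 1 := by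
    rw [← pow_add, Even.neg_one_pow ⟨n, rfl⟩]
  have hmul : algebraMap R L d * (β * (-(-1 : L) ^ n * w)
      - (-1 : L) ^ n * algebraMap R L E) = 1 := by
    have : algebraMap R L d * (β * (-(-1 : L) ^ n * w) - (-1 : L) ^ n * algebraMap R L E)
        = -(-1 : L) ^ n * (u * w + (algebraMap R L d * algebraMap R L E + (-1 : L) ^ n))
          + ((-1 : L) ^ n) * ((-1 : L) ^ n) := by
      rw [hu']; ring
    rw [this, e2, hsq, mul_zero, zero_add]
  have hdinv : (algebraMap R L d)⁻¹ ∈ A := by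
    rw [inv_eq_of_mul_eq_one_right hmul]
    refine sub_mem (mul_mem hβA (mul_mem ?_ hwA)) (mul_mem ?_ (Subalgebra.algebraMap_mem _ _))
    · have : (-(-1 : L) ^ n) = algebraMap R L (-(-1) ^ n) := by
        rw [map_neg, map_pow, map_neg, map_one]
      rw [this]; exact Subalgebra.algebraMap_mem _ _
    · have : ((-1 : L) ^ n) = algebraMap R L ((-1) ^ n) := by
        rw [map_pow, map_neg, map_one]
      rw [this]; exact Subalgebra.algebraMap_mem _ _
  have hγA : γ ∈ A := by
    have : γ = β - (algebraMap R L d)⁻¹ := by rw [hβdef]; ring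
    rw [this]; exact sub_mem hβA hdinv
  have hadj : Algebra.adjoin R ({γ} : Set L) ≤ A :=
    Algebra.adjoin_le (Set.singleton_subset_iff.mpr hγA)
  -- conclude
  refine ⟨β, fun s => ?_⟩
  have hs : s ∈ Algebra.adjoin R (t : Set S) := by rw [ht]; trivial
  have hmap : algebraMap S L s ∈ (Algebra.adjoin R (t : Set S)).map
      (IsScalarTower.toAlgHom R S L) := ⟨s, hs, rfl⟩
  rw [AlgHom.map_adjoin] at hmap
  refine Algebra.adjoin_le ?_ hmap
  rintro x ⟨y, hy, rfl⟩
  have h2 : algebraMap R L d * algebraMap S L y ∈ Algebra.adjoin R ({γ} : Set L) :=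
    hdt ⟨y, hy⟩
  have h3 := hadj h2
  have hxy : (IsScalarTower.toAlgHom R S L) y
      = (algebraMap R L d)⁻¹ * (algebraMap R L d * algebraMap S L y) := by
    rw [← mul_assoc, inv_mul_cancel₀ hdL, one_mul]
    rfl
  rw [hxy]
  exact mul_mem hdinv h3
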